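/- Let V be a finite-dimensional vector space over a field F, G a group, and ρ : G → Aut_F(V) a very simple representation with dim_F V > 1. Then V is an absolutely simple G-module. -/

import Mathlib

/-- A representation `ρ : G → Aut_F(V)` is *very simple* if every `F`-subalgebra
`R ⊆ End_F(V)` containing `Id` and stable under conjugation by all `ρ(σ)` equals
`F·Id` or `End_F(V)`. -/
def VerySimple {F V G : Type*} [Field F] [AddCommGroup V] [Module F V] [Group G]
    (ρ : Representation F G V) : Prop :=
  ∀ R : Subalgebra F (Module.End F V),
    (∀ σ : G, ∀ r ∈ R, ρ σ ∘ₗ r ∘ₗ ρ σ⁻¹ ∈ R) → R = ⊥ ∨ R = ⊤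

/-- For a nonzero vector there is a dual functional taking value `1` on it. -/
lemma exists_dual_eq_one {F V : Type*} [Field F] [AddCommGroup V] [Module F V]
    (v : V) (hv : v ≠ 0) : ∃ φ : V →ₗ[F] F, φ v = 1 := by
  obtain ⟨W', hW'⟩ := Submodule.exists_isCompl (F ∙ v)
  let π := Submodule.linearProjOfIsCompl _ _ hW'
  let e := LinearEquiv.toSpanNonzeroSingleton F V v hv
  refine ⟨e.symm.toLinearMap ∘ₗ π, ?_⟩
  have h1 : π v = ⟨v, Submodule.mem_span_singleton_self v⟩ :=
    Submodule.linearProjOfIsCompl_apply_left hW' ⟨v, Submodule.mem_span_singleton_self v⟩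
  have h2 : e 1 = ⟨v, Submodule.mem_span_singleton_self v⟩ := by
    apply Subtype.ext
    simp [e, LinearEquiv.toSpanNonzeroSingleton]
  simp only [LinearMap.coe_comp, Function.comp_apply, LinearEquiv.coe_coe, h1, ← h2,
    LinearEquiv.symm_apply_apply]

/-- A very simple representation of `F`-dimension `> 1` is absolutely simple:
every `G`-invariant subspace is trivial and every `G`-equivariant endomorphism is a
scalar. -/
theorem verySimple_implies_absolutely_simple {F V G : Type*} [Field F] [AddCommGroup V]
    [Module F V] [FiniteDimensional F V] [Group G] (ρ : Representation F G V)
    (hρ : VerySimple ρ) (hdim : 1 < Module.finrank F V) :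
    (∀ W : Submodule F V, (∀ σ : G, ∀ v ∈ W, ρ σ v ∈ W) → W = ⊥ ∨ W = ⊤) ∧
    (∀ f : Module.End F V, (∀ σ : G, f ∘ₗ ρ σ = ρ σ ∘ₗ f) →
      ∃ c : F, f = c • LinearMap.id) := by
  constructor
  · intro W hW
    by_contra hcon
    push_neg at hcon
    obtain ⟨hWbot, hWtop⟩ := hcon
    obtain ⟨w₀, hw₀W, hw₀⟩ := Submodule.exists_mem_ne_zero_of_ne_bot hWbot
    have hex : ∃ v : V, v ∉ W := by
      by_contra hall
      push_neg at hall
      exact hWtop (Submodule.eq_top_iff'.mpr hall)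
    obtain ⟨v₀, hv₀W⟩ := hex
    -- the stabilizer subalgebra of `W`
    set R : Subalgebra F (Module.End F V) :=
      { carrier := {r | ∀ v ∈ W, r v ∈ W}
        mul_mem' := fun {a b} ha hb v hv => ha _ (hb v hv)
        one_mem' := fun v hv => hv
        add_mem' := fun {a b} ha hb v hv => W.add_mem (ha v hv) (hb v hv)
        algebraMap_mem' := fun c v hv => by
          simpa [Module.algebraMap_end_eq_smul_id] using W.smul_mem c hv } with hR
    have hmem : ∀ r : Module.End F V, r ∈ R ↔ ∀ v ∈ W, r v ∈ W := fun r => Iff.rfl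
    have hstab : ∀ σ : G, ∀ r ∈ R, ρ σ ∘ₗ r ∘ₗ ρ σ⁻¹ ∈ R := by
      intro σ r hr v hv
      exact hW σ _ (hr _ (hW σ⁻¹ v hv))
    rcases hρ R hstab with h | h
    · -- a projection onto `W` belongs to `R` but is not a scalar
      obtain ⟨W', hW'⟩ := Submodule.exists_isCompl W
      have hW'bot : W' ≠ ⊥ := by
        rintro rfl
        exact hWtop (by simpa using hW'.sup_eq_top)
      obtain ⟨v₁, hv₁W', hv₁⟩ := Submodule.exists_mem_ne_zero_of_ne_bot hW'bot
      set π : Module.End F V := W.subtype ∘ₗ Submodule.projectionOnto W W' hW' with hπ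
      have hπR : π ∈ R := by
        intro v hv
        simp [hπ, Submodule.projectionOnto_apply_left hW' ⟨v, hv⟩, hv]
      rw [h, Algebra.mem_bot] at hπR
      obtain ⟨c, hc⟩ := hπR
      have hcw : π w₀ = c • w₀ := by
        rw [← hc]; simp [Module.algebraMap_end_eq_smul_id]
      have hcv : π v₁ = c • v₁ := by
        rw [← hc]; simp [Module.algebraMap_end_eq_smul_id]
      have h1 : π w₀ = w₀ := by
        simp [hπ, Submodule.projectionOnto_apply_left hW' ⟨w₀, hw₀W⟩]
      have h2 : π v₁ = 0 := by
        simp [hπ, Submodule.projectionOnto_apply_right hW' ⟨v₁, hv₁W'⟩]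
      have hc0 : c = 0 := by
        have := hcv.symm.trans h2
        rcases smul_eq_zero.mp this with h | h
        · exact h
        · exact absurd h hv₁
      rw [hc0, zero_smul] at hcw
      exact hw₀ (h1.symm.trans hcw)
    · -- a rank-one map sending `w₀` outside `W` would belong to `R = ⊤`
      obtain ⟨φ, hφ⟩ := exists_dual_eq_one (F := F) w₀ hw₀
      have : (LinearMap.smulRight φ v₀) ∈ R := by rw [h]; trivial
      have := this w₀ hw₀W
      simp [hφ] at this
      exact hv₀W this
  · intro f hcomm
    set R := Subalgebra.centralizer F ({f} : Set (Module.End F V)) with hR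
    have hstab : ∀ σ : G, ∀ r ∈ R, ρ σ ∘ₗ r ∘ₗ ρ σ⁻¹ ∈ R := by
      intro σ r hr
      rw [hR, Subalgebra.mem_centralizer_iff] at hr ⊢
      intro g hg
      rw [Set.mem_singleton_iff] at hg
      rw [hg]
      have hfr := hr f rfl
      have hfρ : f * ρ σ = ρ σ * f := hcomm σ
      have hfρ' : f * ρ σ⁻¹ = ρ σ⁻¹ * f := hcomm σ⁻¹
      show f * (ρ σ * r * ρ σ⁻¹) = (ρ σ * r * ρ σ⁻¹) * f
      calc f * (ρ σ * r * ρ σ⁻¹) = (f * ρ σ) * r * ρ σ⁻¹ := by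
            simp only [mul_assoc]
        _ = ρ σ * (f * r) * ρ σ⁻¹ := by rw [hfρ]; simp only [mul_assoc]
        _ = ρ σ * (r * f) * ρ σ⁻¹ := by rw [hfr]
        _ = ρ σ * r * (f * ρ σ⁻¹) := by simp only [mul_assoc]
        _ = ρ σ * r * (ρ σ⁻¹ * f) := by rw [hfρ']
        _ = (ρ σ * r * ρ σ⁻¹) * f := by simp only [mul_assoc]
    rcases hρ R hstab with h | h
    · have hf : f ∈ R := by
        rw [hR, Subalgebra.mem_centralizer_iff]
        rintro g rfl; rfl
      rw [h, Algebra.mem_bot] at hf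
      obtain ⟨c, hc⟩ := hf
      exact ⟨c, by rw [← hc, Module.algebraMap_end_eq_smul_id]⟩
    · -- `f` is central in `End F V`, hence a scalar
      have hnt : Nontrivial V := by
        have : 0 < Module.finrank F V := lt_trans zero_lt_one hdim
        exact Module.nontrivial_of_finrank_pos this
      obtain ⟨v, hv⟩ := exists_ne (0 : V)
      obtain ⟨φ, hφ⟩ := exists_dual_eq_one (F := F) v hv
      refine ⟨φ (f v), ?_⟩
      ext u
      have hg : (LinearMap.smulRight φ u) ∈ R := by rw [h]; trivial
      rw [hR, Subalgebra.mem_centralizer_iff] at hg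
      have := hg f rfl
      have heval := congrArg (fun (m : Module.End F V) => m v) this
      simpa [Module.End.mul_apply, hφ] using heval
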